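/- With I ~ I(n,D,p) an Erdős–Rényi random monomial ideal and q = 1-p, the expected dimension of the degree-d component of S/I, for d ≥ 1, equals q^{-1}·∑_{|a|=d} q^{(a_1+1)···(a_n+1) - ∑_{j=D+1}^{|a|} h_{B_a}(j)} where B_a = S/⟨x_1^{a_1+1},...,x_n^{a_n+1}⟩ and the inner sum is zero when |a| ≤ D. -/

import Mathlib

open MvPolynomial

/-- The finite set of exponent vectors of the monomials of degree exactly `D`
in `n` variables. -/
noncomputable def Mon (n D : ℕ) : Finset (Fin n →₀ ℕ) :=
  (Finset.Nat.antidiagonalTuple n D).map Finsupp.equivFunOnFinite.symm.toEmbedding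

/-- The finite set of exponent vectors of the non-constant monomials of degree at most `D`
in `n` variables (the candidate generators of an Erdős–Rényi random monomial ideal). -/
noncomputable def MonLE (n D : ℕ) : Finset (Fin n →₀ ℕ) :=
  (Finset.Icc 1 D).biUnion fun j => Mon n j

/-- The monomial ideal generated by a finite set of exponent vectors. -/
noncomputable def spanOf (K : Type*) [Field K] {n : ℕ} (G : Finset (Fin n →₀ ℕ)) :
    Ideal (MvPolynomial (Fin n) K) :=
  Ideal.span ((fun b => MvPolynomial.monomial b (1 : K)) '' ↑G)

/-- The complete intersection `⟨x_1^{a_1+1},…,x_n^{a_n+1}⟩` attached to the exponent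
vector `a`. -/
noncomputable def annMon (K : Type*) [Field K] {n : ℕ} (a : Fin n →₀ ℕ) :
    Ideal (MvPolynomial (Fin n) K) :=
  Ideal.span (Set.range fun i => (X i : MvPolynomial (Fin n) K) ^ (a i + 1))

/-- The Hilbert function of a graded quotient `S/I`. -/
noncomputable def hilb (K : Type*) [Field K] {n : ℕ} (I : Ideal (MvPolynomial (Fin n) K))
    (j : ℕ) : ℕ :=
  Module.finrank K
    (Submodule.map (Ideal.Quotient.mkₐ K I).toLinearMap
      (MvPolynomial.homogeneousSubmodule (Fin n) K j))

/-! ### Auxiliary lemmas -/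

open scoped Classical

lemma mem_Mon {n d : ℕ} {a : Fin n →₀ ℕ} : a ∈ Mon n d ↔ ∑ i, a i = d := by
  simp only [Mon, Finset.mem_map, Equiv.toEmbedding_apply]
  constructor
  · rintro ⟨x, hx, rfl⟩
    simpa [Finset.Nat.mem_antidiagonalTuple] using hx
  · intro h
    exact ⟨a, by simpa [Finset.Nat.mem_antidiagonalTuple] using h, by simp⟩

section FieldLemmas

variable {K : Type*} [Field K] {n : ℕ}

lemma mem_spanOf {G : Finset (Fin n →₀ ℕ)} {f : MvPolynomial (Fin n) K} :
    f ∈ spanOf K G ↔ ∀ b ∈ f.support, ∃ g ∈ G, g ≤ b := by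
  rw [spanOf, mem_ideal_span_monomial_image]
  simp

lemma monomial_mem_spanOf {G : Finset (Fin n →₀ ℕ)} {a : Fin n →₀ ℕ} :
    (monomial a (1 : K)) ∈ spanOf K G ↔ ∃ g ∈ G, g ≤ a := by
  rw [mem_spanOf]
  simp [support_monomial]

lemma homogeneousSubmodule_eq_span (d : ℕ) :
    homogeneousSubmodule (Fin n) K d =
      Submodule.span K ((fun a => monomial a (1 : K)) '' {a | a ∈ Mon n d}) := by
  apply le_antisymm
  · intro f hf
    rw [f.as_sum]
    refine Submodule.sum_mem _ fun a ha => ?_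
    have h1 : (monomial a (coeff a f)) = (coeff a f) • monomial a (1 : K) := by
      rw [smul_monomial, smul_eq_mul, mul_one]
    rw [h1]
    refine Submodule.smul_mem _ _ (Submodule.subset_span ⟨a, ?_, rfl⟩)
    have h2 := hf (mem_support_iff.mp ha)
    rw [Set.mem_setOf_eq, mem_Mon]
    change (Finsupp.weight (fun _ => (1 : ℕ))) a = d at h2
    rw [← Finsupp.degree_eq_weight_one] at h2
    rw [← h2, Finsupp.degree]
    exact (Finset.sum_subset (Finset.subset_univ _) (by
      intro i _ hi
      simpa using hi)).symm
  · rw [Submodule.span_le]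
    rintro _ ⟨a, ha, rfl⟩
    rw [SetLike.mem_coe, mem_homogeneousSubmodule]
    refine isHomogeneous_monomial _ ?_
    rw [Set.mem_setOf_eq, mem_Mon] at ha
    rw [Finsupp.degree, ← ha]
    exact Finset.sum_subset (Finset.subset_univ _) (by intro i _ hi; simpa using hi)

lemma support_subset_of_mem_span {A : Set (Fin n →₀ ℕ)} {f : MvPolynomial (Fin n) K}
    (hf : f ∈ Submodule.span K ((fun a => monomial a (1 : K)) '' A)) :
    ↑f.support ⊆ A := by
  induction hf using Submodule.span_induction with
  | mem x hx =>
    obtain ⟨a, ha, rfl⟩ := hx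
    refine subset_trans ?_ (Set.singleton_subset_iff.mpr ha)
    simpa using Finset.coe_subset.mpr (support_monomial_subset (s := a) (a := (1 : K)))
  | zero => simp
  | add x y hx hy ihx ihy =>
    refine subset_trans ?_ (Set.union_subset ihx ihy)
    exact_mod_cast Finset.coe_subset.mpr (MvPolynomial.support_add (p := x) (q := y))
  | smul c x hx ih =>
    refine subset_trans ?_ ih
    exact_mod_cast Finset.coe_subset.mpr (MvPolynomial.support_smul (a := c) (f := x))

lemma hilb_spanOf (G : Finset (Fin n →₀ ℕ)) (d : ℕ) :
    hilb K (spanOf K G) d = ((Mon n d).filter fun a => ¬ ∃ g ∈ G, g ≤ a).card := by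
  classical
  set S : Finset (Fin n →₀ ℕ) := (Mon n d).filter (fun a => ¬ ∃ g ∈ G, g ≤ a) with hSdef
  set Q : MvPolynomial (Fin n) K →ₗ[K] _ :=
    (Ideal.Quotient.mkₐ K (spanOf K G)).toLinearMap with hQdef
  have hQ0 : ∀ a : Fin n →₀ ℕ, (∃ g ∈ G, g ≤ a) → Q (monomial a 1) = 0 := by
    intro a ha
    have h1 : monomial a (1 : K) ∈ spanOf K G := monomial_mem_spanOf.mpr ha
    have : Q (monomial a 1) = Ideal.Quotient.mk (spanOf K G) (monomial a 1) := rfl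
    rw [this, Ideal.Quotient.eq_zero_iff_mem]
    exact h1
  have hmap : Submodule.map Q (homogeneousSubmodule (Fin n) K d)
      = Submodule.span K (Set.range fun a : S => Q (monomial (a : Fin n →₀ ℕ) (1 : K))) := by
    rw [homogeneousSubmodule_eq_span, Submodule.map_span]
    apply le_antisymm
    · rw [Submodule.span_le]
      rintro _ ⟨_, ⟨a, ha, rfl⟩, rfl⟩
      by_cases hga : ∃ g ∈ G, g ≤ a
      · rw [hQ0 a hga]; exact Submodule.zero_mem _
      · exact Submodule.subset_span ⟨⟨a, Finset.mem_filter.mpr ⟨ha, hga⟩⟩, rfl⟩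
    · rw [Submodule.span_le]
      rintro _ ⟨a, rfl⟩
      exact Submodule.subset_span
        ⟨monomial (a : Fin n →₀ ℕ) 1, ⟨a, (Finset.mem_filter.mp a.2).1, rfl⟩, rfl⟩
  have hli0 : LinearIndependent K fun a : S => (monomial (a : Fin n →₀ ℕ) (1 : K)) := by
    have := (basisMonomials (Fin n) K).linearIndependent
    have h := this.comp (fun a : S => (a : Fin n →₀ ℕ)) Subtype.coe_injective
    simpa [coe_basisMonomials, Function.comp_def] using h
  have hdisj : Disjoint (Submodule.span K
      (Set.range fun a : S => (monomial (a : Fin n →₀ ℕ) (1 : K)))) (LinearMap.ker Q) := by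
    rw [Submodule.disjoint_def]
    intro f hf hker
    have hrange : (Set.range fun a : S => (monomial (a : Fin n →₀ ℕ) (1 : K)))
        = (fun a => monomial a (1 : K)) '' (↑S : Set (Fin n →₀ ℕ)) := by
      ext x; simp
    rw [hrange] at hf
    have hsupp : ↑f.support ⊆ (↑S : Set (Fin n →₀ ℕ)) := support_subset_of_mem_span hf
    have hmem : f ∈ spanOf K G := by
      have h0 : Q f = 0 := LinearMap.mem_ker.mp hker
      have h1 : Q f = Ideal.Quotient.mk (spanOf K G) f := rfl
      rw [h1, Ideal.Quotient.eq_zero_iff_mem] at h0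
      exact h0
    rw [mem_spanOf] at hmem
    rw [← support_eq_empty, Finset.eq_empty_iff_forall_notMem]
    intro b hb
    have hbS := hsupp hb
    rw [Finset.mem_coe, hSdef, Finset.mem_filter] at hbS
    exact hbS.2 (hmem b hb)
  have hli : LinearIndependent K fun a : S => Q (monomial (a : Fin n →₀ ℕ) (1 : K)) := by
    have := hli0.map (f := Q) (by simpa using hdisj)
    simpa [Function.comp_def] using this
  rw [hilb, hmap, finrank_span_eq_card hli, Fintype.card_coe]

lemma annMon_eq_spanOf (a : Fin n →₀ ℕ) :
    annMon K a
      = spanOf K (Finset.image (fun i => Finsupp.single i (a i + 1)) Finset.univ) := by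
  rw [annMon, spanOf]
  congr 1
  ext f
  simp only [Set.mem_range, Set.mem_image, Finset.coe_image, Finset.coe_univ, Set.image_univ,
    X_pow_eq_monomial]
  constructor
  · rintro ⟨i, rfl⟩; exact ⟨Finsupp.single i (a i + 1), ⟨i, rfl⟩, rfl⟩
  · rintro ⟨_, ⟨i, rfl⟩, rfl⟩; exact ⟨i, rfl⟩

lemma hilb_annMon (a : Fin n →₀ ℕ) (j : ℕ) :
    hilb K (annMon K a) j = ((Mon n j).filter fun b => b ≤ a).card := by
  rw [annMon_eq_spanOf, hilb_spanOf]
  congr 1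
  apply Finset.filter_congr
  intro b _
  simp only [Finset.mem_image, Finset.mem_univ, true_and, exists_exists_eq_and,
    Finsupp.single_le_iff, not_exists]
  constructor
  · intro h
    rw [Finsupp.le_def]
    intro i
    have := h i
    omega
  · intro h i
    have := Finsupp.le_def.mp h i
    omega

lemma sum_filter_card (a : Fin n →₀ ℕ) {d : ℕ} (ha : ∑ i, a i = d) :
    ∏ i, (a i + 1) = ∑ j ∈ Finset.range (d + 1), ((Mon n j).filter fun b => b ≤ a).card := by
  have hIic : (Finset.Iic a).card = ∏ i, (a i + 1) := by
    rw [Finsupp.card_Iic]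
    rw [Finset.prod_subset (Finset.subset_univ a.support)]
    · exact Finset.prod_congr rfl fun i _ => by rw [Nat.card_Iic]
    · intro i _ hi
      simp only [Finsupp.notMem_support_iff] at hi
      rw [hi]
      simp
  rw [← hIic]
  rw [Finset.card_eq_sum_card_fiberwise (f := fun b => ∑ i, b i)
    (t := Finset.range (d + 1)) ?_]
  · refine Finset.sum_congr rfl fun j _ => ?_
    congr 1
    ext b
    simp only [Finset.mem_filter, Finset.mem_Iic, mem_Mon]
    tauto
  · intro b hb
    rw [Finset.mem_coe, Finset.mem_Iic] at hb
    rw [Finset.mem_coe, Finset.mem_range, Nat.lt_succ_iff, ← ha]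
    exact Finset.sum_le_sum fun i _ => Finsupp.le_def.mp hb i

lemma filter_card_zero (a : Fin n →₀ ℕ) :
    ((Mon n 0).filter fun b => b ≤ a).card = 1 := by
  have : ((Mon n 0).filter fun b => b ≤ a) = {0} := by
    ext b
    simp only [Finset.mem_filter, mem_Mon, Finset.mem_singleton]
    constructor
    · rintro ⟨hb, -⟩
      ext i
      have := Finset.sum_eq_zero_iff.mp hb i (Finset.mem_univ i)
      simpa using this
    · rintro rfl
      exact ⟨by simp, zero_le (a := a)⟩
  rw [this, Finset.card_singleton]

lemma filter_card_big (a : Fin n →₀ ℕ) {d j : ℕ} (ha : ∑ i, a i = d) (hj : d < j) :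
    ((Mon n j).filter fun b => b ≤ a).card = 0 := by
  rw [Finset.card_eq_zero, Finset.eq_empty_iff_forall_notMem]
  intro b hb
  rw [Finset.mem_filter, mem_Mon] at hb
  have : ∑ i, b i ≤ ∑ i, a i := Finset.sum_le_sum fun i _ => Finsupp.le_def.mp hb.2 i
  omega

lemma div_card (D : ℕ) (a : Fin n →₀ ℕ) :
    ((MonLE n D).filter fun g => g ≤ a).card
      = ∑ j ∈ Finset.Icc 1 D, ((Mon n j).filter fun b => b ≤ a).card := by
  rw [MonLE, Finset.filter_biUnion, Finset.card_biUnion]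
  intro j hj k hk hjk
  simp only [Finset.disjoint_left]
  intro b hb hb'
  rw [Finset.mem_filter, mem_Mon] at hb hb'
  exact hjk (hb.1.symm.trans hb'.1)

lemma key_identity (D d : ℕ) (a : Fin n →₀ ℕ) (ha : ∑ i, a i = d) (hd : 1 ≤ d) :
    ∏ i, (a i + 1)
      = ((MonLE n D).filter fun g => g ≤ a).card + 1
        + ∑ j ∈ Finset.Icc (D + 1) d, hilb K (annMon K a) j := by
  have hc : ∀ j, hilb K (annMon K a) j = ((Mon n j).filter fun b => b ≤ a).card :=
    fun j => hilb_annMon a j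
  simp only [hc]
  set c : ℕ → ℕ := fun j => ((Mon n j).filter fun b => b ≤ a).card with hcdef
  rw [sum_filter_card a ha, div_card]
  have hins : Finset.range (d + 1) = insert 0 (Finset.Icc 1 d) := by
    ext j; simp only [Finset.mem_range, Finset.mem_insert, Finset.mem_Icc]; omega
  rw [hins, Finset.sum_insert (by simp), filter_card_zero]
  have hIcc : ∀ m k : ℕ, Finset.Icc (m + 1) k = Finset.Ioc m k := by
    intro m k; ext j; simp [Nat.succ_le_iff]
  rcases le_or_gt D d with hDd | hDd
  · have h1 : Finset.Icc 1 d = Finset.Ioc 0 d := hIcc 0 d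
    have h2 : Finset.Icc 1 D = Finset.Ioc 0 D := hIcc 0 D
    rw [h1, h2, hIcc D d, ← Finset.sum_Ioc_consecutive c (Nat.zero_le D) hDd]
    ring
  · have h3 : Finset.Icc (D + 1) d = ∅ := by
      ext j; simp only [Finset.mem_Icc, Finset.notMem_empty, iff_false]; omega
    rw [h3, Finset.sum_empty, add_zero]
    have h4 : Finset.Icc 1 D = Finset.Ioc 0 d ∪ Finset.Ioc d D := by
      rw [Finset.Ioc_union_Ioc_eq_Ioc (Nat.zero_le d) (le_of_lt hDd), ← hIcc]
    rw [h4, Finset.sum_union (by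
      rw [Finset.disjoint_left]
      intro j hj hj'
      rw [Finset.mem_Ioc] at hj hj'
      omega), ← hIcc 0 d]
    have h5 : ∑ j ∈ Finset.Ioc d D, c j = 0 := by
      apply Finset.sum_eq_zero
      intro j hj
      rw [Finset.mem_Ioc] at hj
      exact filter_card_big a ha hj.1
    rw [h5, add_zero]
    ring

end FieldLemmas

lemma sum_powerset_one {α : Type*} (M : Finset α) (p q : ℝ) (h : p + q = 1) :
    ∑ G ∈ M.powerset, p ^ G.card * q ^ (M.card - G.card) = 1 := by
  have hpa := Finset.prod_add (fun _ : α => p) (fun _ : α => q) M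
  simp only [Finset.prod_const, h, one_pow] at hpa
  rw [hpa]
  refine Finset.sum_congr rfl fun t ht => ?_
  rw [Finset.card_sdiff_of_subset (Finset.mem_powerset.mp ht)]

lemma sum_powerset_disjoint {α : Type*} [DecidableEq α] (M T : Finset α) (hT : T ⊆ M) (p q : ℝ)
    (h : p + q = 1) :
    ∑ G ∈ M.powerset, (if Disjoint G T then p ^ G.card * q ^ (M.card - G.card) else 0)
      = q ^ T.card := by
  rw [Finset.sum_ite, Finset.sum_const_zero, add_zero]
  have hfil : M.powerset.filter (fun G => Disjoint G T) = (M \ T).powerset := by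
    ext G
    simp only [Finset.mem_filter, Finset.mem_powerset, Finset.subset_sdiff]
  rw [hfil]
  have hcard : (M \ T).card = M.card - T.card := Finset.card_sdiff_of_subset hT
  have hTM : T.card ≤ M.card := Finset.card_le_card hT
  have : ∀ G ∈ (M \ T).powerset,
      p ^ G.card * q ^ (M.card - G.card)
        = q ^ T.card * (p ^ G.card * q ^ ((M \ T).card - G.card)) := by
    intro G hG
    have hGle : G.card ≤ (M \ T).card := Finset.card_le_card (Finset.mem_powerset.mp hG)
    have : M.card - G.card = T.card + ((M \ T).card - G.card) := by omega
    rw [this, pow_add]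
    ring
  rw [Finset.sum_congr rfl this, ← Finset.mul_sum, sum_powerset_one _ p q h, mul_one]

set_option maxHeartbeats 1000000 in
/-- For an Erdős–Rényi random monomial ideal `I ∼ 𝓘(n,D,p)` with `q = 1-p`, the expected
dimension of the degree-`d` component of `S/I` (for `d ≥ 1`) is
`q⁻¹ ∑_{|a|=d} q^{(a_1+1)⋯(a_n+1) - ∑_{j=D+1}^{|a|} h_{B_a}(j)}`, where
`B_a = S/⟨x_1^{a_1+1},…,x_n^{a_n+1}⟩` and the inner sum is zero when `|a| ≤ D`. -/
theorem stmt11 (K : Type*) [Field K] (n D : ℕ) (hD : 1 ≤ D)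
    (p q : ℝ) (hp0 : 0 ≤ p) (hp1 : p ≤ 1) (hq : q = 1 - p) (d : ℕ) (hd : 1 ≤ d) :
    ∑ G ∈ (MonLE n D).powerset,
        p ^ G.card * q ^ ((MonLE n D).card - G.card) * (hilb K (spanOf K G) d : ℝ)
      = q⁻¹ * ∑ a ∈ Mon n d,
          q ^ ((∏ i : Fin n, (a i + 1)) -
            ∑ j ∈ Finset.Icc (D + 1) d, hilb K (annMon K a) j) := by
  classical
  have hpq : p + q = 1 := by rw [hq]; ring
  set T : (Fin n →₀ ℕ) → Finset (Fin n →₀ ℕ) :=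
    fun a => (MonLE n D).filter (fun g => g ≤ a) with hT
  have step1 : ∀ G ∈ (MonLE n D).powerset,
      p ^ G.card * q ^ ((MonLE n D).card - G.card) * (hilb K (spanOf K G) d : ℝ)
        = ∑ a ∈ Mon n d,
            (if Disjoint G (T a)
              then p ^ G.card * q ^ ((MonLE n D).card - G.card) else 0) := by
    intro G hG
    rw [hilb_spanOf, Finset.card_filter]
    push_cast
    rw [Finset.mul_sum]
    refine Finset.sum_congr rfl fun a ha => ?_
    have hiff : (¬ ∃ g ∈ G, g ≤ a) ↔ Disjoint G (T a) := by
      rw [Finset.disjoint_left]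
      constructor
      · intro h g hgG hgT
        exact h ⟨g, hgG, (Finset.mem_filter.mp hgT).2⟩
      · rintro h ⟨g, hgG, hga⟩
        exact h hgG (Finset.mem_filter.mpr ⟨Finset.mem_powerset.mp hG hgG, hga⟩)
    rw [mul_ite, mul_one, mul_zero, if_congr hiff rfl rfl]
  rw [Finset.sum_congr rfl step1, Finset.sum_comm]
  have step2 : ∀ a ∈ Mon n d,
      ∑ G ∈ (MonLE n D).powerset,
          (if Disjoint G (T a)
            then p ^ G.card * q ^ ((MonLE n D).card - G.card) else 0)
        = q ^ (T a).card :=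
    fun a _ => sum_powerset_disjoint (MonLE n D) (T a) (Finset.filter_subset _ _) p q hpq
  rw [Finset.sum_congr rfl step2, Finset.mul_sum]
  refine Finset.sum_congr rfl fun a ha => ?_
  have ha' : ∑ i, a i = d := mem_Mon.mp ha
  have hkey := key_identity (K := K) D d a ha' hd
  have hTpos : 1 ≤ (T a).card := by
    rw [Nat.succ_le_iff, Finset.card_pos]
    obtain ⟨i, hi⟩ : ∃ i, a i ≠ 0 := by
      by_contra h
      push_neg at h
      simp only [h] at ha'
      simp at ha'
      omega
    refine ⟨Finsupp.single i 1, Finset.mem_filter.mpr ⟨?_, ?_⟩⟩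
    · rw [MonLE, Finset.mem_biUnion]
      refine ⟨1, Finset.mem_Icc.mpr ⟨le_refl 1, hD⟩, mem_Mon.mpr ?_⟩
      simp [Finsupp.single_apply]
    · exact Finsupp.single_le_iff.mpr (Nat.one_le_iff_ne_zero.mpr hi)
  have hexp : (∏ i, (a i + 1)) - ∑ j ∈ Finset.Icc (D + 1) d, hilb K (annMon K a) j
      = (T a).card + 1 := by rw [hkey, Nat.add_sub_cancel]
  rw [hexp]
  by_cases hq0 : q = 0
  · rw [hq0]
    rw [zero_pow (by omega), zero_pow (by omega), mul_zero]
  · rw [pow_succ', ← mul_assoc, inv_mul_cancel₀ hq0, one_mul]
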